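/- Let H = X₁X₂³Y₂³ + Y₁(X₂⁴Y₂² + X₂²Y₂⁴) ∈ V_{1,6}. Then the linear map T^{(1,2)}(H, •) : V_{1,2} → V_{0,4} is surjective; equivalently, since dim V_{1,2} = 6 = dim V_{0,4} + 1, its kernel is one-dimensional. -/

import Mathlib

set_option synthInstance.maxHeartbeats 1000000
set_option maxHeartbeats 1000000
noncomputable section
open MvPolynomial

/-- The `r`-th transvectant `T^(r) : V_d × V_{d'} → V_{d+d'-2r}` of binary forms (in the
variables `X = X 0`, `Y = X 1`), as a bilinear map:
`T^(r)(P, P') = ∑_{i=0}^{r} (-1)^i C(r,i) (∂^r P/∂X^(r-i)∂Y^i) (∂^r P'/∂X^i ∂Y^(r-i))`. -/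
def transvBil (r : ℕ) :
    MvPolynomial (Fin 2) ℂ →ₗ[ℂ] MvPolynomial (Fin 2) ℂ →ₗ[ℂ] MvPolynomial (Fin 2) ℂ :=
  ∑ i ∈ Finset.range (r + 1),
    ((-1 : ℂ) ^ i * (r.choose i : ℂ)) •
      (LinearMap.mul ℂ (MvPolynomial (Fin 2) ℂ)).compl₁₂
        (((pderiv (0 : Fin 2)).toLinearMap ^ (r - i)) * ((pderiv (1 : Fin 2)).toLinearMap ^ i))
        (((pderiv (0 : Fin 2)).toLinearMap ^ i) * ((pderiv (1 : Fin 2)).toLinearMap ^ (r - i)))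

/-- The `(1,s)`-th transvectant `T^{(1,s)} : V_{1,b} × V_{1,b'} → V_{0,b+b'-2s}` for biforms,
where an element `X₁ ⊗ P + Y₁ ⊗ Q` of `V_{1,b} = V_1 ⊗ V_b` is recorded as the pair
`(P, Q)` of binary forms of degree `b` in `(X₂, Y₂)`:
`T^{(1,s)}((P,Q), (P',Q')) = T^(s)(P, Q') - T^(s)(Q, P')`. -/
def transv1 (s : ℕ) :
    (MvPolynomial (Fin 2) ℂ × MvPolynomial (Fin 2) ℂ) →ₗ[ℂ]
      (MvPolynomial (Fin 2) ℂ × MvPolynomial (Fin 2) ℂ) →ₗ[ℂ] MvPolynomial (Fin 2) ℂ :=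
  (transvBil s).compl₁₂ (LinearMap.fst ℂ _ _) (LinearMap.snd ℂ _ _) -
    (transvBil s).compl₁₂ (LinearMap.snd ℂ _ _) (LinearMap.fst ℂ _ _)

private lemma fin2_finsupp (m : Fin 2 →₀ ℕ) :
    m = Finsupp.single 0 (m 0) + Finsupp.single 1 (m 1) := by
  ext i
  fin_cases i <;> simp

private lemma fin2_degree (m : Fin 2 →₀ ℕ) : m.degree = m 0 + m 1 := by
  rw [Finsupp.degree_apply, Finset.sum_subset (Finset.subset_univ m.support)
    (fun i _ hi => Finsupp.notMem_support_iff.1 hi), Fin.sum_univ_two]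

private lemma hdecomp (n : ℕ) (R : MvPolynomial (Fin 2) ℂ)
    (hR : R ∈ homogeneousSubmodule (Fin 2) ℂ n) :
    R = ∑ k ∈ Finset.range (n+1),
      C (coeff (Finsupp.single 0 k + Finsupp.single 1 (n-k)) R) * (X 0 ^ k * X 1 ^ (n-k)) := by
  rw [mem_homogeneousSubmodule] at hR
  have key : ∀ k, C (coeff (Finsupp.single (0:Fin 2) k + Finsupp.single 1 (n-k)) R)
      * (X 0 ^ k * X 1 ^ (n-k)) =
      monomial (Finsupp.single (0:Fin 2) k + Finsupp.single 1 (n-k))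
        (coeff (Finsupp.single (0:Fin 2) k + Finsupp.single 1 (n-k)) R) := by
    intro k
    rw [X_pow_eq_monomial, X_pow_eq_monomial, monomial_mul, C_mul_monomial, one_mul, mul_one]
  ext m
  simp only [key, coeff_sum, coeff_monomial]
  by_cases hm : m 0 + m 1 = n
  · rw [Finset.sum_eq_single (m 0)]
    · have h1 : m 1 = n - m 0 := by omega
      have hm' : (Finsupp.single (0:Fin 2) (m 0) + Finsupp.single 1 (n - m 0)) = m := by
        rw [← h1]; exact (fin2_finsupp m).symm
      rw [if_pos hm', hm']
    · intro k hk hne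
      rw [if_neg]
      intro h
      exact hne (by simpa using (DFunLike.congr_fun h 0))
    · intro h
      exact absurd (Finset.mem_range.2 (by omega)) h
  · rw [Finset.sum_eq_zero, hR.coeff_eq_zero (by rw [fin2_degree]; omega)]
    intro k hk
    rw [if_neg]
    intro h
    have h0 := DFunLike.congr_fun h 0
    have h1 := DFunLike.congr_fun h 1
    simp at h0 h1
    have hk' : k ≤ n := Nat.lt_succ_iff.mp (Finset.mem_range.1 hk)
    exact hm (by omega)

private lemma mem2 (a b c : ℂ) :
    C a * X 0 ^ 2 + C b * (X 0 * X 1) + C c * X 1 ^ 2 ∈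
      homogeneousSubmodule (Fin 2) ℂ 2 := by
  rw [mem_homogeneousSubmodule]
  have h1 : MvPolynomial.IsHomogeneous (C a * X 0 ^ 2 : MvPolynomial (Fin 2) ℂ) 2 := by
    simpa using (isHomogeneous_C (Fin 2) a).mul ((isHomogeneous_X ℂ (0:Fin 2)).pow 2)
  have h2 : MvPolynomial.IsHomogeneous (C b * (X 0 * X 1) : MvPolynomial (Fin 2) ℂ) 2 := by
    simpa using (isHomogeneous_C (Fin 2) b).mul
      ((isHomogeneous_X ℂ (0:Fin 2)).mul (isHomogeneous_X ℂ (1:Fin 2)))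
  have h3 : MvPolynomial.IsHomogeneous (C c * X 1 ^ 2 : MvPolynomial (Fin 2) ℂ) 2 := by
    simpa using (isHomogeneous_C (Fin 2) c).mul ((isHomogeneous_X ℂ (1:Fin 2)).pow 2)
  exact (h1.add h2).add h3

private lemma Tformula (a b c d e f : ℂ) :
    transv1 2 (X 0 ^ 3 * X 1 ^ 3, X 0 ^ 4 * X 1 ^ 2 + X 0 ^ 2 * X 1 ^ 4)
      (C a * X 0 ^ 2 + C b * (X 0 * X 1) + C c * X 1 ^ 2,
       C d * X 0 ^ 2 + C e * (X 0 * X 1) + C f * X 1 ^ 2) =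
    C (-4*a) * X 0 ^ 4 + C (12*d+16*b) * (X 0 ^3 * X 1)
      + C (-18*e-24*a-24*c) * (X 0^2 * X 1^2)
      + C (12*f+16*b) * (X 0 * X 1^3) + C (-4*c) * X 1 ^ 4 := by
  simp [transv1, transvBil, Finset.sum_range_succ, LinearMap.compl₁₂_apply,
    LinearMap.mul_apply', pow_succ, pow_zero, LinearMap.mul_apply', pderiv_mul, pderiv_pow,
    nsmul_eq_mul, map_ofNat, smul_eq_C_mul]
  ring

private lemma coeff_X_pow_pair (a b i j : ℕ) :
    coeff (Finsupp.single 0 a + Finsupp.single 1 b)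
      ((X 0 : MvPolynomial (Fin 2) ℂ) ^ i * X 1 ^ j) = if i = a ∧ j = b then 1 else 0 := by
  rw [X_pow_eq_monomial, X_pow_eq_monomial, monomial_mul, one_mul, coeff_monomial]
  by_cases h : i = a ∧ j = b
  · obtain ⟨rfl, rfl⟩ := h
    simp
  · rw [if_neg, if_neg h]
    intro heq
    have h0 := DFunLike.congr_fun heq 0
    have h1 := DFunLike.congr_fun heq 1
    simp at h0 h1
    exact h ⟨h0, h1⟩

private lemma coeff5 (r4 r3 r2 r1 r0 : ℂ)
    (h : C r4 * X 0 ^ 4 + C r3 * (X 0 ^3 * X 1) + C r2 * (X 0^2 * X 1^2)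
      + C r1 * (X 0 * X 1^3) + C r0 * X 1 ^ 4 = (0 : MvPolynomial (Fin 2) ℂ)) :
    r4 = 0 ∧ r3 = 0 ∧ r2 = 0 ∧ r1 = 0 ∧ r0 = 0 := by
  have h' : C r4 * (X 0 ^ 4 * X 1 ^ 0) + C r3 * (X 0 ^3 * X 1 ^ 1) + C r2 * (X 0^2 * X 1^2)
      + C r1 * (X 0 ^ 1 * X 1^3) + C r0 * (X 0 ^ 0 * X 1 ^ 4) = (0 : MvPolynomial (Fin 2) ℂ) := by
    rw [← h]; ring
  have key : ∀ a b : ℕ, coeff (Finsupp.single (0 : Fin 2) a + Finsupp.single 1 b)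
      (C r4 * (X 0 ^ 4 * X 1 ^ 0) + C r3 * (X 0 ^3 * X 1 ^ 1) + C r2 * (X 0^2 * X 1^2)
      + C r1 * (X 0 ^ 1 * X 1^3) + C r0 * (X 0 ^ 0 * X 1 ^ 4)) =
      r4 * (if 4 = a ∧ 0 = b then 1 else 0) + r3 * (if 3 = a ∧ 1 = b then 1 else 0)
      + r2 * (if 2 = a ∧ 2 = b then 1 else 0) + r1 * (if 1 = a ∧ 3 = b then 1 else 0)
      + r0 * (if 0 = a ∧ 4 = b then 1 else 0) := by
    intro a b
    simp only [coeff_add, coeff_C_mul, coeff_X_pow_pair]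
  refine ⟨?_, ?_, ?_, ?_, ?_⟩
  · have := (key 4 0).symm.trans (congrArg (coeff (Finsupp.single (0 : Fin 2) 4 + Finsupp.single 1 0)) h')
    norm_num at this; exact this
  · have := (key 3 1).symm.trans (congrArg (coeff (Finsupp.single (0 : Fin 2) 3 + Finsupp.single 1 1)) h')
    norm_num at this; exact this
  · have := (key 2 2).symm.trans (congrArg (coeff (Finsupp.single (0 : Fin 2) 2 + Finsupp.single 1 2)) h')
    norm_num at this; exact this
  · have := (key 1 3).symm.trans (congrArg (coeff (Finsupp.single (0 : Fin 2) 1 + Finsupp.single 1 3)) h')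
    norm_num at this; exact this
  · have := (key 0 4).symm.trans (congrArg (coeff (Finsupp.single (0 : Fin 2) 0 + Finsupp.single 1 4)) h')
    norm_num at this; exact this


/-- **Surjectivity of `T^{(1,2)}(H, •) : V_{1,2} → V_{0,4}` for
`H = X₁X₂³Y₂³ + Y₁(X₂⁴Y₂² + X₂²Y₂⁴) ∈ V_{1,6}`.**  Equivalently, since
`dim V_{1,2} = 6 = dim V_{0,4} + 1`, its kernel is one-dimensional. -/
theorem transvectant_16_surjective :
    (∀ R ∈ homogeneousSubmodule (Fin 2) ℂ 4,
      ∃ PQ ∈ (homogeneousSubmodule (Fin 2) ℂ 2).prod (homogeneousSubmodule (Fin 2) ℂ 2),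
        transv1 2 (X 0 ^ 3 * X 1 ^ 3, X 0 ^ 4 * X 1 ^ 2 + X 0 ^ 2 * X 1 ^ 4) PQ = R) ∧
    Module.finrank ℂ
      ↥((homogeneousSubmodule (Fin 2) ℂ 2).prod (homogeneousSubmodule (Fin 2) ℂ 2) ⊓
        LinearMap.ker (transv1 2 (X 0 ^ 3 * X 1 ^ 3, X 0 ^ 4 * X 1 ^ 2 + X 0 ^ 2 * X 1 ^ 4))) = 1 := by
  constructor
  · -- surjectivity
    intro R hR
    have hR4 := hdecomp 4 R hR
    set c0 := coeff (Finsupp.single (0 : Fin 2) 0 + Finsupp.single 1 4) R with hc0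
    set c1 := coeff (Finsupp.single (0 : Fin 2) 1 + Finsupp.single 1 3) R with hc1
    set c2 := coeff (Finsupp.single (0 : Fin 2) 2 + Finsupp.single 1 2) R with hc2
    set c3 := coeff (Finsupp.single (0 : Fin 2) 3 + Finsupp.single 1 1) R with hc3
    set c4 := coeff (Finsupp.single (0 : Fin 2) 4 + Finsupp.single 1 0) R with hc4
    refine ⟨(C ((-1:ℂ)/4 * c4) * X 0 ^ 2 + C 0 * (X 0 * X 1) + C ((-1:ℂ)/4 * c0) * X 1 ^ 2,
             C ((1:ℂ)/12 * c3) * X 0 ^ 2 + C ((1:ℂ)/18 * (6*c4 + 6*c0 - c2)) * (X 0 * X 1)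
               + C ((1:ℂ)/12 * c1) * X 1 ^ 2),
      Submodule.mem_prod.2 ⟨mem2 _ _ _, mem2 _ _ _⟩, ?_⟩
    rw [Tformula]
    conv_rhs => rw [hR4]
    simp only [Finset.sum_range_succ, Finset.sum_range_zero, zero_add, Nat.reduceSub]
    rw [← hc0, ← hc1, ← hc2, ← hc3, ← hc4]
    rw [show (-4:ℂ) * ((-1:ℂ)/4 * c4) = c4 by ring,
      show (12:ℂ) * ((1:ℂ)/12 * c3) + 16 * 0 = c3 by ring,
      show (-18:ℂ) * ((1:ℂ)/18 * (6*c4 + 6*c0 - c2)) - 24 * ((-1:ℂ)/4 * c4)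
        - 24 * ((-1:ℂ)/4 * c0) = c2 by ring,
      show (12:ℂ) * ((1:ℂ)/12 * c1) + 16 * 0 = c1 by ring,
      show (-4:ℂ) * ((-1:ℂ)/4 * c0) = c0 by ring]
    ring
  · -- kernel is one-dimensional
    set v : MvPolynomial (Fin 2) ℂ × MvPolynomial (Fin 2) ℂ :=
      (C 3 * (X 0 * X 1), C (-4) * X 0 ^ 2 + C (-4) * X 1 ^ 2) with hv
    have hv1 : v.1 = C 0 * X 0 ^ 2 + C 3 * (X 0 * X 1) + C 0 * X 1 ^ 2 := by simp [hv]
    have hv2 : v.2 = C (-4) * X 0 ^ 2 + C 0 * (X 0 * X 1) + C (-4) * X 1 ^ 2 := by simp [hv]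
    have hspan : (homogeneousSubmodule (Fin 2) ℂ 2).prod (homogeneousSubmodule (Fin 2) ℂ 2) ⊓
        LinearMap.ker (transv1 2 (X 0 ^ 3 * X 1 ^ 3, X 0 ^ 4 * X 1 ^ 2 + X 0 ^ 2 * X 1 ^ 4)) =
        Submodule.span ℂ {v} := by
      apply le_antisymm
      · rintro ⟨P, Q⟩ hx
        obtain ⟨hW, hk⟩ := Submodule.mem_inf.1 hx
        obtain ⟨hP, hQ⟩ := Submodule.mem_prod.1 hW
        have hk' : transv1 2 (X 0 ^ 3 * X 1 ^ 3, X 0 ^ 4 * X 1 ^ 2 + X 0 ^ 2 * X 1 ^ 4)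
            (P, Q) = 0 := LinearMap.mem_ker.1 hk
        set p0 := coeff (Finsupp.single (0 : Fin 2) 0 + Finsupp.single 1 2) P with hp0
        set p1 := coeff (Finsupp.single (0 : Fin 2) 1 + Finsupp.single 1 1) P with hp1
        set p2 := coeff (Finsupp.single (0 : Fin 2) 2 + Finsupp.single 1 0) P with hp2
        set q0 := coeff (Finsupp.single (0 : Fin 2) 0 + Finsupp.single 1 2) Q with hq0
        set q1 := coeff (Finsupp.single (0 : Fin 2) 1 + Finsupp.single 1 1) Q with hq1
        set q2 := coeff (Finsupp.single (0 : Fin 2) 2 + Finsupp.single 1 0) Q with hq2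
        have hP' : P = C p2 * X 0 ^ 2 + C p1 * (X 0 * X 1) + C p0 * X 1 ^ 2 := by
          rw [hdecomp 2 P hP]
          simp only [Finset.sum_range_succ, Finset.sum_range_zero, zero_add, Nat.reduceSub]
          rw [← hp0, ← hp1, ← hp2]
          ring
        have hQ' : Q = C q2 * X 0 ^ 2 + C q1 * (X 0 * X 1) + C q0 * X 1 ^ 2 := by
          rw [hdecomp 2 Q hQ]
          simp only [Finset.sum_range_succ, Finset.sum_range_zero, zero_add, Nat.reduceSub]
          rw [← hq0, ← hq1, ← hq2]
          ring
        rw [hP', hQ', Tformula] at hk'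
        obtain ⟨h4, h3, h2, h1, h0⟩ := coeff5 _ _ _ _ _ hk'
        have ha : p2 = 0 := by linear_combination (-1/4 : ℂ) * h4
        have hc : p0 = 0 := by linear_combination (-1/4 : ℂ) * h0
        have he : q1 = 0 := by
          linear_combination (-1/18 : ℂ) * h2 + (-4/3 : ℂ) * ha + (-4/3 : ℂ) * hc
        have hd : q2 = -4 * p1 / 3 := by linear_combination (1/12 : ℂ) * h3
        have hf : q0 = -4 * p1 / 3 := by linear_combination (1/12 : ℂ) * h1
        rw [Submodule.mem_span_singleton]
        refine ⟨p1/3, ?_⟩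
        have key3 : (C (p1/3) * C 3 : MvPolynomial (Fin 2) ℂ) = C p1 := by
          rw [← C_mul]; congr 1; ring
        have key4 : (C (p1/3) * C (-4) : MvPolynomial (Fin 2) ℂ) = C (-4 * p1 / 3) := by
          rw [← C_mul]; congr 1; ring
        refine Prod.ext ?_ ?_
        · show (p1/3) • v.1 = P
          rw [hv1, hP', ha, hc, smul_eq_C_mul]
          simp only [C_0, zero_mul, add_zero, zero_add]
          rw [← mul_assoc, key3]
        · show (p1/3) • v.2 = Q
          rw [hv2, hQ', he, hd, hf, smul_eq_C_mul]
          simp only [C_0, zero_mul, add_zero, zero_add]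
          rw [mul_add, ← mul_assoc, ← mul_assoc, key4]
      · rw [Submodule.span_le, Set.singleton_subset_iff]
        refine Submodule.mem_inf.2 ⟨Submodule.mem_prod.2 ⟨?_, ?_⟩, ?_⟩
        · rw [hv1]; exact mem2 _ _ _
        · rw [hv2]; exact mem2 _ _ _
        · rw [LinearMap.mem_ker]
          have : v = (C 0 * X 0 ^ 2 + C 3 * (X 0 * X 1) + C 0 * X 1 ^ 2,
              C (-4) * X 0 ^ 2 + C 0 * (X 0 * X 1) + C (-4) * X 1 ^ 2) := by
            refine Prod.ext hv1 hv2
          rw [this, Tformula]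
          norm_num
    rw [hspan]
    refine finrank_span_singleton ?_
    rw [hv]
    intro h
    have h1 : (C 3 * (X 0 * X 1) : MvPolynomial (Fin 2) ℂ) = 0 := by
      simpa using congrArg Prod.fst h
    exact (mul_ne_zero (C_ne_zero.2 (by norm_num)) (mul_ne_zero (X_ne_zero 0) (X_ne_zero 1))) h1
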